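/- Let p ∈ ℕ with p ≥ 1 and let λ ≥ 0 be a real number with λ ≠ k(k+1) for every k ∈ ℕ (equivalently, λ = ν(ν+1) with ν ≥ 0 and ν ∉ ℤ). Then every twice-differentiable solution a : (−1,1) → ℝ of the master ODE (1−τ²)·a″(τ) + 2(p−1)·τ·a′(τ) + (λ − p(p−1))·a(τ) = 0 has well-defined finite limits as τ → 1⁻ and as τ → −1⁺. -/

import Mathlib

open Set Filter Real

lemma two_pow_sq_aux (k : ℕ) : ((2:ℝ) ^ k) ^ 2 = 4 ^ k := by
  rw [← pow_mul, mul_comm, pow_mul]; norm_num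

set_option maxHeartbeats 1000000 in
lemma key (k : ℕ) (μ : ℝ) (a : ℝ → ℝ)
    (hdiff : ∀ τ ∈ Set.Ioo (-1 : ℝ) 1,
      DifferentiableAt ℝ a τ ∧ DifferentiableAt ℝ (deriv a) τ)
    (hode : ∀ τ ∈ Set.Ioo (-1 : ℝ) 1,
      (1 - τ ^ 2) * deriv (deriv a) τ + 2 * (k : ℝ) * τ * deriv a τ + μ * a τ = 0) :
    ∃ L : ℝ, Filter.Tendsto a (nhdsWithin 1 (Set.Ioo (-1 : ℝ) 1)) (nhds L) := by
  set b : ℝ → ℝ := deriv a with hbdef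
  set C : ℝ := (1 + |μ|) * 2 ^ k with hCdef
  have hC0 : 0 < C := by positivity
  set E : ℝ → ℝ := fun τ => a τ ^ 2 + (1 - τ) / (1 + τ) ^ (2 * k) * b τ ^ 2 with hEdef
  -- derivative bound for E on (0, 1)
  have hEkey : ∀ τ ∈ Set.Ioo (0 : ℝ) 1,
      ∃ e', HasDerivAt E e' τ ∧ e' ≤ C * E τ / Real.sqrt (1 - τ) := by
    intro τ hτ
    have hτ' : τ ∈ Set.Ioo (-1 : ℝ) 1 := ⟨by linarith [hτ.1], hτ.2⟩
    have h1p : (0 : ℝ) < 1 + τ := by linarith [hτ.1]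
    have h1m : (0 : ℝ) < 1 - τ := by linarith [hτ.2]
    have hτ0 : (0 : ℝ) < τ := hτ.1
    have hx : (0 : ℝ) < 1 - τ ^ 2 := by nlinarith
    have hxne : (1 : ℝ) - τ ^ 2 ≠ 0 := ne_of_gt hx
    have ha : HasDerivAt a (b τ) τ := (hdiff τ hτ').1.hasDerivAt
    have hbd : HasDerivAt b (deriv b τ) τ := (hdiff τ hτ').2.hasDerivAt
    have hode' : deriv b τ = (-(2 * (k:ℝ) * τ * b τ) - μ * a τ) / (1 - τ ^ 2) := by
      have := hode τ hτ'
      field_simp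
      linarith [this]
    have hpow : HasDerivAt (fun τ : ℝ => (1 + τ) ^ (2 * k))
        ((2 * k : ℕ) * (1 + τ) ^ (2 * k - 1)) τ := by
      have := ((hasDerivAt_id τ).const_add 1).pow (2 * k)
      simpa [Pi.pow_def] using this
    have hqne : ((1 + τ) ^ (2 * k) : ℝ) ≠ 0 := by positivity
    have hρ : HasDerivAt (fun τ : ℝ => (1 - τ) / (1 + τ) ^ (2 * k))
        (((-1) * (1 + τ) ^ (2 * k) - (1 - τ) * ((2 * k : ℕ) * (1 + τ) ^ (2 * k - 1)))
          / ((1 + τ) ^ (2 * k)) ^ 2) τ := by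
      exact ((hasDerivAt_id τ).const_sub 1).div hpow hqne
    have hE' : HasDerivAt E
        (2 * a τ * b τ +
          ((((-1) * (1 + τ) ^ (2 * k) - (1 - τ) * ((2 * k : ℕ) * (1 + τ) ^ (2 * k - 1)))
            / ((1 + τ) ^ (2 * k)) ^ 2) * b τ ^ 2
           + (1 - τ) / (1 + τ) ^ (2 * k) * (2 * b τ * deriv b τ))) τ := by
      have h2 : HasDerivAt (fun τ => a τ ^ 2) (2 * a τ * b τ) τ := by
        simpa [mul_comm, mul_assoc, Pi.pow_def] using ha.pow 2
      have h3 : HasDerivAt (fun τ => b τ ^ 2) (2 * b τ * deriv b τ) τ := by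
        simpa [mul_comm, mul_assoc, Pi.pow_def] using hbd.pow 2
      exact h2.add (hρ.mul h3)
    refine ⟨_, hE', ?_⟩
    rw [hode']
    clear hE' hρ hpow hbd ha
    set A := a τ with hA
    set B := b τ with hB
    have hEτ : E τ = A ^ 2 + (1 - τ) / (1 + τ) ^ (2 * k) * B ^ 2 := rfl
    rw [hEτ]
    clear_value A B
    clear hEτ hode hdiff hEdef hbdef
    -- now a pure inequality
    have hq : (0:ℝ) < (1 + τ) ^ (2 * k) := by positivity
    set q : ℝ := (1 + τ) ^ (2 * k) with hqdef
    set Q : ℝ := (1 + τ) ^ k with hQdef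
    have hQ0 : (0:ℝ) < Q := by positivity
    have hQq : q = Q ^ 2 := by rw [hqdef, hQdef, ← pow_mul, mul_comm]
    have hQ1 : (1:ℝ) ≤ Q := one_le_pow₀ (by linarith)
    have hQle : Q ≤ 2 ^ k := pow_le_pow_left₀ (by linarith) (by linarith) k
    set s : ℝ := Real.sqrt (1 - τ) with hsdef
    have hs0 : (0:ℝ) < s := Real.sqrt_pos.2 h1m
    have hs2 : s ^ 2 = 1 - τ := Real.sq_sqrt h1m.le
    set P : ℝ := B / Q with hPdef
    have hBP : B = P * Q := by rw [hPdef]; field_simp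
    have hid : (1 - τ) / q * (2 * B * ((-(2 * (k:ℝ) * τ * B) - μ * A) / (1 - τ ^ 2)))
        = -(4 * (k:ℝ) * τ * B ^ 2 / (q * (1 + τ))) - 2 * μ / (q * (1 + τ)) * (A * B) := by
      have hfac : (1:ℝ) - τ ^ 2 = (1 - τ) * (1 + τ) := by ring
      rw [hfac]
      field_simp
      ring
    have t2 : (((-1) * q - (1 - τ) * (((2 * k : ℕ) : ℝ) * (1 + τ) ^ (2 * k - 1))) / q ^ 2) * B ^ 2 ≤ 0 := by
      have hnum : ((-1) * q - (1 - τ) * (((2 * k : ℕ) : ℝ) * (1 + τ) ^ (2 * k - 1))) ≤ 0 := by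
        have h1 : (0:ℝ) ≤ (1 - τ) * (((2 * k : ℕ) : ℝ) * (1 + τ) ^ (2 * k - 1)) := by positivity
        linarith
      exact mul_nonpos_of_nonpos_of_nonneg
        (div_nonpos_of_nonpos_of_nonneg hnum (by positivity)) (sq_nonneg B)
    have t3 : -(4 * (k:ℝ) * τ * B ^ 2 / (q * (1 + τ))) ≤ 0 := by
      have : (0:ℝ) ≤ 4 * (k:ℝ) * τ * B ^ 2 / (q * (1 + τ)) := by positivity
      linarith
    have hc0 : |2 - 2 * μ / (q * (1 + τ))| ≤ 2 * (1 + |μ|) := by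
      have h1 : |2 * μ / (q * (1 + τ))| ≤ 2 * |μ| := by
        rw [abs_div]
        have hd : (1:ℝ) ≤ |q * (1 + τ)| := by
          rw [abs_of_pos (by positivity)]
          nlinarith
        calc |2 * μ| / |q * (1 + τ)| ≤ |2 * μ| := div_le_self (abs_nonneg _) hd
            _ = 2 * |μ| := by rw [abs_mul]; simp
      calc |2 - 2 * μ / (q * (1 + τ))| ≤ |2| + |2 * μ / (q * (1 + τ))| := abs_sub _ _
        _ ≤ 2 + 2 * |μ| := by rw [abs_two]; linarith
        _ = 2 * (1 + |μ|) := by ring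
    have hcross : (2 - 2 * μ / (q * (1 + τ))) * (A * B) ≤ 2 * (1 + |μ|) * (|A| * |B|) := by
      calc (2 - 2 * μ / (q * (1 + τ))) * (A * B)
          ≤ |(2 - 2 * μ / (q * (1 + τ))) * (A * B)| := le_abs_self _
        _ = |2 - 2 * μ / (q * (1 + τ))| * (|A| * |B|) := by rw [abs_mul, abs_mul]
        _ ≤ 2 * (1 + |μ|) * (|A| * |B|) := by
            apply mul_le_mul_of_nonneg_right hc0 (by positivity)
    have hfin : 2 * (1 + |μ|) * (|A| * |B|) ≤ C * (A ^ 2 + (1 - τ) / q * B ^ 2) / s := by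
      rw [le_div_iff₀ hs0, hCdef]
      have hE2 : A ^ 2 + (1 - τ) / q * B ^ 2 = A ^ 2 + (s * P) ^ 2 := by
        rw [hQq, hPdef, ← hs2]; field_simp
      rw [hE2]
      have hB' : |B| = |P| * Q := by rw [hBP, abs_mul, abs_of_pos hQ0]
      rw [hB']
      have key : 2 * |A| * |P| * s ≤ A ^ 2 + (s * P) ^ 2 := by
        clear_value q Q s P
        clear hid t2 t3 hcross hc0 hE2 hB' hCdef hQq hs2 hBP
        have h1 : A ^ 2 = |A| ^ 2 := (sq_abs A).symm
        have h2 : (s * P) ^ 2 = (s * |P|) ^ 2 := by rw [mul_pow, mul_pow, sq_abs]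
        rw [h1, h2]
        nlinarith [sq_nonneg (|A| - s * |P|)]
      have hμ0 : (0:ℝ) ≤ 1 + |μ| := by positivity
      calc 2 * (1 + |μ|) * (|A| * (|P| * Q)) * s = (1 + |μ|) * Q * (2 * |A| * |P| * s) := by ring
        _ ≤ (1 + |μ|) * 2 ^ k * (2 * |A| * |P| * s) := by
            apply mul_le_mul_of_nonneg_right (mul_le_mul_of_nonneg_left hQle hμ0) (by positivity)
        _ ≤ (1 + |μ|) * 2 ^ k * (A ^ 2 + (s * P) ^ 2) := by
            exact mul_le_mul_of_nonneg_left key (by positivity)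
    rw [hid]
    calc 2 * A * B + ((((-1) * q - (1 - τ) * (((2 * k : ℕ) : ℝ) * (1 + τ) ^ (2 * k - 1))) / q ^ 2) * B ^ 2
          + (-(4 * (k:ℝ) * τ * B ^ 2 / (q * (1 + τ))) - 2 * μ / (q * (1 + τ)) * (A * B)))
        ≤ (2 - 2 * μ / (q * (1 + τ))) * (A * B) := by linarith [t2, t3]
      _ ≤ 2 * (1 + |μ|) * (|A| * |B|) := hcross
      _ ≤ C * (A ^ 2 + (1 - τ) / q * B ^ 2) / s := hfin
  -- Gronwall: D is antitone
  set D : ℝ → ℝ := fun τ => E τ * Real.exp (2 * C * Real.sqrt (1 - τ)) with hDdef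
  have hDderiv : ∀ τ ∈ Set.Ioo (0 : ℝ) 1, ∃ d', HasDerivAt D d' τ ∧ d' ≤ 0 := by
    intro τ hτ
    obtain ⟨e', hE', hle⟩ := hEkey τ hτ
    have h1m : (0:ℝ) < 1 - τ := by linarith [hτ.2]
    have hs0 : 0 < Real.sqrt (1 - τ) := Real.sqrt_pos.2 h1m
    have hsq : HasDerivAt (fun τ : ℝ => Real.sqrt (1 - τ))
        (1 / (2 * Real.sqrt (1 - τ)) * (-1)) τ := by
      have h := (Real.hasDerivAt_sqrt (ne_of_gt h1m)).comp τ ((hasDerivAt_id τ).const_sub 1)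
      simpa [Function.comp_def] using h
    have hw : HasDerivAt (fun τ : ℝ => Real.exp (2 * C * Real.sqrt (1 - τ)))
        (Real.exp (2 * C * Real.sqrt (1 - τ)) * (2 * C * (1 / (2 * Real.sqrt (1 - τ)) * (-1)))) τ :=
      (hsq.const_mul (2 * C)).exp
    refine ⟨_, hE'.mul hw, ?_⟩
    have hrw : e' * Real.exp (2 * C * Real.sqrt (1 - τ)) +
        E τ * (Real.exp (2 * C * Real.sqrt (1 - τ)) * (2 * C * (1 / (2 * Real.sqrt (1 - τ)) * (-1))))
        = Real.exp (2 * C * Real.sqrt (1 - τ)) * (e' - C * E τ / Real.sqrt (1 - τ)) := by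
      field_simp
      ring
    rw [hrw]
    exact mul_nonpos_of_nonneg_of_nonpos (Real.exp_pos _).le (by linarith [hle])
  have hDanti : AntitoneOn D (Set.Ico (1/2 : ℝ) 1) := by
    have hmem : ∀ x ∈ Set.Ico (1/2 : ℝ) 1, x ∈ Set.Ioo (0:ℝ) 1 := by
      intro x hx; exact ⟨by linarith [hx.1], hx.2⟩
    apply antitoneOn_of_deriv_nonpos (convex_Ico _ _)
    · intro x hx
      obtain ⟨d', hD', _⟩ := hDderiv x (hmem x hx)
      exact hD'.differentiableAt.continuousAt.continuousWithinAt
    · rw [interior_Ico]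
      intro x hx
      obtain ⟨d', hD', _⟩ := hDderiv x (hmem x (Set.Ioo_subset_Ico_self hx))
      exact hD'.differentiableAt.differentiableWithinAt
    · rw [interior_Ico]
      intro x hx
      obtain ⟨d', hD', hle⟩ := hDderiv x (hmem x (Set.Ioo_subset_Ico_self hx))
      rw [hD'.deriv]
      exact hle
  set W2 : ℝ := D (1/2) with hW2def
  have hEle : ∀ τ ∈ Set.Ico (1/2 : ℝ) 1, E τ ≤ W2 ∧ 0 ≤ E τ := by
    intro τ hτ
    have hEnn : 0 ≤ E τ := by
      have h1m : (0:ℝ) ≤ 1 - τ := by linarith [hτ.2]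
      have h1p : (0:ℝ) ≤ 1 + τ := by linarith [hτ.1]
      have h2 : 0 ≤ (1 - τ) / (1 + τ) ^ (2 * k) * b τ ^ 2 := by
        apply mul_nonneg (div_nonneg h1m (pow_nonneg h1p _)) (sq_nonneg _)
      have h3 : E τ = a τ ^ 2 + (1 - τ) / (1 + τ) ^ (2 * k) * b τ ^ 2 := rfl
      rw [h3]
      have := sq_nonneg (a τ)
      linarith
    have h1 : E τ ≤ D τ := by
      have hw : 0 ≤ 2 * C * Real.sqrt (1 - τ) := by positivity
      have hexp : 1 ≤ Real.exp (2 * C * Real.sqrt (1 - τ)) := Real.one_le_exp hw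
      calc E τ = E τ * 1 := (mul_one _).symm
        _ ≤ E τ * Real.exp (2 * C * Real.sqrt (1 - τ)) :=
            mul_le_mul_of_nonneg_left hexp hEnn
        _ = D τ := rfl
    have h2 : D τ ≤ D (1/2) := hDanti ⟨le_refl _, by norm_num⟩ hτ hτ.1
    exact ⟨h1.trans h2, hEnn⟩
  have hW2nn : 0 ≤ W2 := by
    have h := hEle (1/2) ⟨le_refl _, by norm_num⟩
    exact h.2.trans h.1
  set K : ℝ := Real.sqrt W2 * 2 ^ k with hKdef
  have hK0 : 0 ≤ K := by positivity
  have hBle : ∀ τ ∈ Set.Ioo (1/2 : ℝ) 1, b τ ≤ K / Real.sqrt (1 - τ) := by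
    intro τ hτ
    have h1m : (0:ℝ) < 1 - τ := by linarith [hτ.2]
    have hs0 : 0 < Real.sqrt (1 - τ) := Real.sqrt_pos.2 h1m
    have h1p : (0:ℝ) < 1 + τ := by linarith [hτ.1]
    have hq : (0:ℝ) < (1 + τ) ^ (2 * k) := by positivity
    obtain ⟨hEW, hEnn⟩ := hEle τ ⟨hτ.1.le, hτ.2⟩
    have hterm : (1 - τ) / (1 + τ) ^ (2 * k) * b τ ^ 2 ≤ W2 := by
      have h3 : E τ = a τ ^ 2 + (1 - τ) / (1 + τ) ^ (2 * k) * b τ ^ 2 := rfl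
      have h4 := sq_nonneg (a τ)
      rw [h3] at hEW
      linarith
    have hq4 : ((1:ℝ) + τ) ^ (2 * k) ≤ 4 ^ k := by
      have h24 : ((2:ℝ)) ^ (2 * k) = 4 ^ k := by
        rw [mul_comm, pow_mul, two_pow_sq_aux]
      calc ((1:ℝ) + τ) ^ (2 * k) ≤ 2 ^ (2 * k) :=
            pow_le_pow_left₀ (by linarith [hτ.1]) (by linarith [hτ.2]) _
        _ = 4 ^ k := h24
    clear_value W2 K
    clear hEle hDanti hDderiv hEkey hode hdiff hEdef hDdef hW2def
    have hsqb : (Real.sqrt (1 - τ) * b τ) ^ 2 ≤ K ^ 2 := by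
      have h1 : (Real.sqrt (1 - τ) * b τ) ^ 2 = (1 - τ) * b τ ^ 2 := by
        rw [mul_pow, Real.sq_sqrt h1m.le]
      have h2 : K ^ 2 = W2 * 4 ^ k := by
        rw [hKdef, mul_pow, Real.sq_sqrt hW2nn, two_pow_sq_aux]
      have h5 : (1 - τ) * b τ ^ 2 ≤ W2 * (1 + τ) ^ (2 * k) := by
        have h7 := mul_le_mul_of_nonneg_right hterm hq.le
        have h8 : (1 - τ) / (1 + τ) ^ (2 * k) * b τ ^ 2 * (1 + τ) ^ (2 * k)
            = (1 - τ) * b τ ^ 2 := by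
          rw [mul_right_comm, div_mul_cancel₀ _ hq.ne']
        rwa [h8] at h7
      have h6 : W2 * (1 + τ) ^ (2 * k) ≤ W2 * 4 ^ k :=
        mul_le_mul_of_nonneg_left hq4 hW2nn
      rw [h1, h2]
      linarith
    have habs : |Real.sqrt (1 - τ) * b τ| ≤ K := by
      calc |Real.sqrt (1 - τ) * b τ| = Real.sqrt ((Real.sqrt (1 - τ) * b τ) ^ 2) :=
            (Real.sqrt_sq_eq_abs _).symm
        _ ≤ Real.sqrt (K ^ 2) := Real.sqrt_le_sqrt hsqb
        _ = K := Real.sqrt_sq hK0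
    rw [le_div_iff₀ hs0]
    calc b τ * Real.sqrt (1 - τ) = Real.sqrt (1 - τ) * b τ := by ring
      _ ≤ |Real.sqrt (1 - τ) * b τ| := le_abs_self _
      _ ≤ K := habs
  have haabs : ∀ τ ∈ Set.Ico (1/2 : ℝ) 1, |a τ| ≤ Real.sqrt W2 := by
    intro τ hτ
    obtain ⟨hEW, hEnn⟩ := hEle τ hτ
    have h1m : (0:ℝ) ≤ 1 - τ := by linarith [hτ.2]
    have h1p : (0:ℝ) ≤ 1 + τ := by linarith [hτ.1]
    have h2 : 0 ≤ (1 - τ) / (1 + τ) ^ (2 * k) * b τ ^ 2 := by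
      apply mul_nonneg (div_nonneg h1m (pow_nonneg h1p _)) (sq_nonneg _)
    have h1 : a τ ^ 2 ≤ W2 := by
      have h3 : E τ = a τ ^ 2 + (1 - τ) / (1 + τ) ^ (2 * k) * b τ ^ 2 := rfl
      rw [h3] at hEW
      linarith
    calc |a τ| = Real.sqrt (a τ ^ 2) := (Real.sqrt_sq_eq_abs _).symm
      _ ≤ Real.sqrt W2 := Real.sqrt_le_sqrt h1
  -- the corrected function G
  set G : ℝ → ℝ := fun τ => a τ + 2 * K * Real.sqrt (1 - τ) with hGdef
  have hGanti : AntitoneOn G (Set.Ico (1/2 : ℝ) 1) := by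
    have hsqd : ∀ x ∈ Set.Ioo (1/2:ℝ) 1, HasDerivAt G
        (b x + 2 * K * (1 / (2 * Real.sqrt (1 - x)) * (-1))) x := by
      intro x hx
      have hx' : x ∈ Set.Ioo (-1:ℝ) 1 := ⟨by linarith [hx.1], hx.2⟩
      have h1m : (0:ℝ) < 1 - x := by linarith [hx.2]
      have ha : HasDerivAt a (b x) x := (hdiff x hx').1.hasDerivAt
      have hsq : HasDerivAt (fun τ : ℝ => Real.sqrt (1 - τ))
          (1 / (2 * Real.sqrt (1 - x)) * (-1)) x := by
        have h := (Real.hasDerivAt_sqrt (ne_of_gt h1m)).comp x ((hasDerivAt_id x).const_sub 1)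
        simpa [Function.comp_def] using h
      exact ha.add (hsq.const_mul (2 * K))
    apply antitoneOn_of_deriv_nonpos (convex_Ico _ _)
    · intro x hx
      have hx' : x ∈ Set.Ioo (-1:ℝ) 1 := ⟨by linarith [hx.1], hx.2⟩
      apply ContinuousWithinAt.add
      · exact (hdiff x hx').1.continuousAt.continuousWithinAt
      · exact (Continuous.continuousWithinAt (by fun_prop))
    · rw [interior_Ico]
      intro x hx
      exact (hsqd x hx).differentiableAt.differentiableWithinAt
    · rw [interior_Ico]
      intro x hx
      rw [(hsqd x hx).deriv]
      have h1m : (0:ℝ) < 1 - x := by linarith [hx.2]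
      have hs0 : 0 < Real.sqrt (1 - x) := Real.sqrt_pos.2 h1m
      have hb := hBle x hx
      have heq : 2 * K * (1 / (2 * Real.sqrt (1 - x)) * (-1)) = -(K / Real.sqrt (1 - x)) := by
        field_simp
      rw [heq]
      linarith [hb]
  have hGbdd : BddBelow (G '' Set.Ioo (1/2 : ℝ) 1) := by
    refine ⟨-(Real.sqrt W2), ?_⟩
    rintro y ⟨τ, hτ, rfl⟩
    have h1 := haabs τ ⟨hτ.1.le, hτ.2⟩
    have h2 : 0 ≤ 2 * K * Real.sqrt (1 - τ) := by positivity
    have h3 : -(Real.sqrt W2) ≤ a τ := by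
      have := abs_le.1 h1
      linarith [this.1]
    show -(Real.sqrt W2) ≤ a τ + 2 * K * Real.sqrt (1 - τ)
    linarith
  have hne : (Set.Ioo (1/2 : ℝ) 1).Nonempty := ⟨3/4, by norm_num⟩
  have hGtend := AntitoneOn.tendsto_nhdsWithin_Ioo_left hne
    (hGanti.mono Set.Ioo_subset_Ico_self) hGbdd
  have hsqrt0 : Filter.Tendsto (fun τ : ℝ => 2 * K * Real.sqrt (1 - τ)) (nhdsWithin 1 (Set.Iio 1))
      (nhds 0) := by
    have hc : Continuous (fun τ : ℝ => 2 * K * Real.sqrt (1 - τ)) := by fun_prop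
    have h := (hc.tendsto 1).mono_left (nhdsWithin_le_nhds (s := Set.Iio 1))
    simpa using h
  refine ⟨sInf (G '' Set.Ioo (1/2:ℝ) 1) - 0, ?_⟩
  have hatend : Filter.Tendsto a (nhdsWithin 1 (Set.Iio (1:ℝ)))
      (nhds (sInf (G '' Set.Ioo (1/2:ℝ) 1) - 0)) := by
    have h := hGtend.sub hsqrt0
    have heq : (fun τ => G τ - 2 * K * Real.sqrt (1 - τ)) = a := by
      funext τ; simp [hGdef]
    rwa [heq] at h
  exact hatend.mono_left (nhdsWithin_mono 1 Set.Ioo_subset_Iio_self)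

/-- for `p ≥ 1` and `λ ≥ 0` not of the form `k(k+1)`, every
twice-differentiable solution of the master ODE on `(-1,1)` has finite one-sided limits
at `τ = 1⁻` and `τ = -1⁺`. -/
theorem stmt_14 (p : ℕ) (hp : 1 ≤ p) (lam : ℝ) (hlam0 : 0 ≤ lam)
    (hlam : ∀ k : ℕ, lam ≠ (k : ℝ) * ((k : ℝ) + 1)) (a : ℝ → ℝ)
    (hdiff : ∀ τ ∈ Set.Ioo (-1 : ℝ) 1,
      DifferentiableAt ℝ a τ ∧ DifferentiableAt ℝ (deriv a) τ)
    (hode : ∀ τ ∈ Set.Ioo (-1 : ℝ) 1,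
      (1 - τ ^ 2) * deriv (deriv a) τ + 2 * ((p : ℝ) - 1) * τ * deriv a τ
        + (lam - (p : ℝ) * ((p : ℝ) - 1)) * a τ = 0) :
    (∃ L : ℝ, Filter.Tendsto a (nhdsWithin 1 (Set.Ioo (-1 : ℝ) 1)) (nhds L)) ∧
    (∃ L : ℝ, Filter.Tendsto a (nhdsWithin (-1) (Set.Ioo (-1 : ℝ) 1)) (nhds L)) := by
  obtain ⟨k, rfl⟩ : ∃ k, p = k + 1 := ⟨p - 1, (Nat.succ_pred_eq_of_pos hp).symm⟩
  set μ : ℝ := lam - ((k + 1 : ℕ) : ℝ) * (k : ℝ) with hμdef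
  have hc : ((k + 1 : ℕ) : ℝ) - 1 = (k : ℝ) := by push_cast; ring
  have hode' : ∀ τ ∈ Set.Ioo (-1 : ℝ) 1,
      (1 - τ ^ 2) * deriv (deriv a) τ + 2 * (k : ℝ) * τ * deriv a τ + μ * a τ = 0 := by
    intro τ hτ
    have h := hode τ hτ
    rw [hc] at h
    exact h
  constructor
  · exact key k μ a hdiff hode'
  · -- reflection
    set ar : ℝ → ℝ := fun τ => a (-τ) with hardef
    have hmem : ∀ τ : ℝ, τ ∈ Set.Ioo (-1 : ℝ) 1 → -τ ∈ Set.Ioo (-1 : ℝ) 1 := by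
      intro τ hτ
      exact ⟨by linarith [hτ.2], by linarith [hτ.1]⟩
    have h1 : ∀ τ ∈ Set.Ioo (-1 : ℝ) 1, HasDerivAt ar (-(deriv a (-τ))) τ := by
      intro τ hτ
      have h := ((hdiff (-τ) (hmem τ hτ)).1.hasDerivAt).comp τ (hasDerivAt_neg τ)
      simp [Function.comp, mul_comm] at h
      exact h
    have h2 : ∀ τ ∈ Set.Ioo (-1 : ℝ) 1,
        HasDerivAt (fun x => -(deriv a (-x))) (deriv (deriv a) (-τ)) τ := by
      intro τ hτ
      have h := (((hdiff (-τ) (hmem τ hτ)).2.hasDerivAt).comp τ (hasDerivAt_neg τ)).neg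
      simp [Function.comp, mul_comm] at h
      exact h
    have h3 : ∀ τ ∈ Set.Ioo (-1 : ℝ) 1,
        HasDerivAt (deriv ar) (deriv (deriv a) (-τ)) τ := by
      intro τ hτ
      apply (h2 τ hτ).congr_of_eventuallyEq
      apply Filter.eventuallyEq_of_mem (isOpen_Ioo.mem_nhds hτ)
      intro x hx
      exact (h1 x hx).deriv
    have hdiff_ar : ∀ τ ∈ Set.Ioo (-1 : ℝ) 1,
        DifferentiableAt ℝ ar τ ∧ DifferentiableAt ℝ (deriv ar) τ := by
      intro τ hτ
      exact ⟨(h1 τ hτ).differentiableAt, (h3 τ hτ).differentiableAt⟩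
    have hode_ar : ∀ τ ∈ Set.Ioo (-1 : ℝ) 1,
        (1 - τ ^ 2) * deriv (deriv ar) τ + 2 * (k : ℝ) * τ * deriv ar τ + μ * ar τ = 0 := by
      intro τ hτ
      rw [(h3 τ hτ).deriv, (h1 τ hτ).deriv]
      have h := hode' (-τ) (hmem τ hτ)
      have hsq : (-τ) ^ 2 = τ ^ 2 := by ring
      rw [hsq] at h
      show (1 - τ ^ 2) * deriv (deriv a) (-τ) + 2 * (k : ℝ) * τ * (-(deriv a (-τ)))
        + μ * a (-τ) = 0
      linarith [h]
    obtain ⟨L, hL⟩ := key k μ ar hdiff_ar hode_ar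
    refine ⟨L, ?_⟩
    have hneg : Filter.Tendsto (fun τ : ℝ => -τ)
        (nhdsWithin (-1) (Set.Ioo (-1 : ℝ) 1)) (nhdsWithin 1 (Set.Ioo (-1 : ℝ) 1)) := by
      have hcw : ContinuousWithinAt (fun τ : ℝ => -τ) (Set.Ioo (-1 : ℝ) 1) (-1) :=
        (continuous_neg.continuousAt).continuousWithinAt
      have hmt : Set.MapsTo (fun τ : ℝ => -τ) (Set.Ioo (-1 : ℝ) 1) (Set.Ioo (-1 : ℝ) 1) := by
        intro x hx
        simp only [Set.mem_Ioo] at hx ⊢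
        constructor
        · linarith [hx.2]
        · linarith [hx.1]
      have h := hcw.tendsto_nhdsWithin hmt
      simpa only [neg_neg] using h
    have hcomp := hL.comp hneg
    have heq : (ar ∘ fun τ : ℝ => -τ) = a := by
      funext τ
      show a (- -τ) = a τ
      rw [neg_neg]
    rwa [heq] at hcomp
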